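/- Let λ ⊆ μ be partitions such that μ/λ is a horizontal strip, and let a be a positive integer with |μ/λ| ≤ a. Then ∑_{ν} (−1)^{a−|ν/λ|} · C(r(λ/ν̄), a−|ν/λ|) = 1, where the sum ranges over all partitions ν with μ ⊆ ν such that ν/λ is a horizontal strip and |ν/λ| ≤ a (a finite set), C(m,k) denotes the ordinary binomial coefficient, and r(λ/ν̄) = #{i ≥ 1 : ν (i+1) < λ i} with ν̄ = (ν_2, ν_3, …). -/

import Mathlib

/-- A partition: an antitone, eventually-zero function `ℕ → ℕ`
(row `i+1` of the usual 1-indexed partition is `f i`). -/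
def IsPartition (f : ℕ → ℕ) : Prop :=
  (∀ i, f (i + 1) ≤ f i) ∧ ∃ N, ∀ i, N ≤ i → f i = 0

/-- `u/l` is a horizontal strip: `l ⊆ u` and `u (i+1) ≤ l i` for all rows. -/
def IsHStrip (l u : ℕ → ℕ) : Prop :=
  (∀ i, l i ≤ u i) ∧ ∀ i, u (i + 1) ≤ l i

/-- The size `|u/l| = ∑_i (u i − l i)` of a skew shape. -/
noncomputable def stripSize (l u : ℕ → ℕ) : ℕ := ∑ᶠ i, (u i - l i)

/-- `r(λ/ν̄) = #{i : ν (i+1) < λ i}`, where `ν̄ = (ν_2, ν_3, …)`. -/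
noncomputable def stripRowsBar (l v : ℕ → ℕ) : ℕ := {i | v (i + 1) < l i}.ncard

section AuxLemmas
open Polynomial Finset

lemma aux_coeff_one_sub_X_pow (r k : ℕ) : ((1 - X : ℤ[X])^r).coeff k = (-1)^k * r.choose k := by
  induction r generalizing k with
  | zero =>
    rcases k with _ | k
    · simp
    · simp [Polynomial.coeff_one, Nat.choose]
  | succ r ih =>
    have : ((1 - X : ℤ[X])^(r+1)) = (1-X)^r - ((1-X)^r) * X^1 := by ring
    rw [this, Polynomial.coeff_sub, Polynomial.coeff_mul_X_pow']
    rcases k with _ | k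
    · simp [ih]
    · simp only [Nat.succ_sub_one, ih, Nat.le_add_left, if_pos, Nat.one_le_iff_ne_zero]
      rw [Nat.choose_succ_succ]
      push_cast
      ring
lemma aux_poly_row (t : ℕ) :
    ∑ b ∈ range (t+1), (X:ℤ[X])^b * (1-X)^(if b < t then 1 else 0) = 1 := by
  rw [Finset.sum_range_succ]
  have h1 : ∑ b ∈ range t, (X:ℤ[X])^b * (1-X)^(if b < t then 1 else 0)
      = (∑ b ∈ range t, (X:ℤ[X])^b) * (1 - X) := by
    rw [Finset.sum_mul]
    exact Finset.sum_congr rfl fun b hb => by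
      rw [if_pos (Finset.mem_range.mp hb)]; ring
  have h2 := geom_sum_mul (X : ℤ[X]) t
  rw [h1, if_neg (lt_irrefl t)]
  have h3 : (∑ b ∈ range t, (X:ℤ[X])^b) * (1 - X) = -((∑ b ∈ range t, (X:ℤ[X])^b) * (X - 1)) := by ring
  rw [h3, h2]
  ring

lemma aux_core (n A : ℕ) (t : Fin (n+1) → ℕ) (ht0 : t 0 = A) :
    ∑ c ∈ (Fintype.piFinset fun i => range (t i + 1)).filter (fun c => ∑ i, c i ≤ A),
      (-1:ℤ)^(A - ∑ i, c i) *
        ((Finset.univ.filter fun i => i ≠ 0 ∧ c i < t i).card.choose (A - ∑ i, c i) : ℤ) = 1 := by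
  have key := Finset.prod_univ_sum (fun i : Fin (n+1) => range (t i + 1))
    (fun i b => (X:ℤ[X])^b * (1-X)^(if i ≠ 0 ∧ b < t i then 1 else 0))
  -- LHS of key
  have lhs : (∏ i : Fin (n+1), ∑ b ∈ range (t i + 1),
      (X:ℤ[X])^b * (1-X)^(if i ≠ 0 ∧ b < t i then 1 else 0)) = ∑ b ∈ range (A+1), (X:ℤ[X])^b := by
    rw [Fin.prod_univ_succ]
    have h0 : (∑ b ∈ range (t 0 + 1),
        (X:ℤ[X])^b * (1-X)^(if (0:Fin (n+1)) ≠ 0 ∧ b < t 0 then 1 else 0))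
        = ∑ b ∈ range (A+1), (X:ℤ[X])^b := by
      rw [ht0]
      exact Finset.sum_congr rfl fun b _ => by simp
    rw [h0]
    have h1 : ∀ i : Fin n, (∑ b ∈ range (t i.succ + 1),
        (X:ℤ[X])^b * (1-X)^(if (i.succ : Fin (n+1)) ≠ 0 ∧ b < t i.succ then 1 else 0)) = 1 := by
      intro i
      have he : ∀ b : ℕ, ((X:ℤ[X])^b * (1-X)^(if (i.succ : Fin (n+1)) ≠ 0 ∧ b < t i.succ then 1 else 0))
          = (X:ℤ[X])^b * (1-X)^(if b < t i.succ then 1 else 0) := by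
        intro b
        congr 2
        simp [Fin.succ_ne_zero]
      rw [Finset.sum_congr rfl fun b _ => he b]
      exact aux_poly_row (t i.succ)
    rw [Finset.prod_congr rfl fun i _ => h1 i]
    simp
  -- RHS inner product
  have inner : ∀ c : Fin (n+1) → ℕ,
      (∏ i : Fin (n+1), (X:ℤ[X])^(c i) * (1-X)^(if i ≠ 0 ∧ c i < t i then 1 else 0))
      = (1-X)^((Finset.univ.filter fun i => i ≠ 0 ∧ c i < t i).card) * X^(∑ i, c i) := by
    intro c
    rw [Finset.prod_mul_distrib, Finset.prod_pow_eq_pow_sum, Finset.prod_pow_eq_pow_sum,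
      Finset.card_filter]
    ring
  rw [lhs] at key
  rw [Finset.sum_congr rfl fun c _ => inner c] at key
  -- take coefficient A
  have hc := congrArg (fun p : ℤ[X] => p.coeff A) key
  simp only [Polynomial.finset_sum_coeff] at hc
  have hl : ∑ b ∈ range (A+1), ((X:ℤ[X])^b).coeff A = 1 := by
    simp only [Polynomial.coeff_X_pow]
    rw [Finset.sum_ite_eq (range (A+1)) A (fun _ => (1:ℤ))]
    simp
  rw [hl] at hc
  rw [Finset.sum_congr rfl (fun c _ => by
    rw [Polynomial.coeff_mul_X_pow', aux_coeff_one_sub_X_pow])] at hc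
  rw [Finset.sum_filter]
  rw [← hc]

def auxPhi (mu : ℕ → ℕ) (n : ℕ) (c : Fin (n+1) → ℕ) : ℕ → ℕ :=
  fun i => mu i + (if h : i < n+1 then c ⟨i, h⟩ else 0)

noncomputable def auxCap (lam mu : ℕ → ℕ) (A n : ℕ) : Fin (n+1) → ℕ :=
  fun i => if i.val = 0 then A else lam (i.val - 1) - mu i.val

lemma aux_size (lam mu : ℕ → ℕ) (n : ℕ) (hlm : ∀ i, lam i ≤ mu i)
    (hmu0 : ∀ i, n ≤ i → mu i = 0) (c : Fin (n+1) → ℕ) :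
    stripSize lam (auxPhi mu n c) = stripSize lam mu + ∑ i, c i := by
  set B : ℕ → ℕ := fun i => if h : i < n+1 then c ⟨i, h⟩ else 0 with hB
  have hpt : ∀ i, auxPhi mu n c i - lam i = (mu i - lam i) + B i := by
    intro i
    have := hlm i
    simp only [auxPhi, hB]
    omega
  have hs1 : (Function.support fun i => mu i - lam i).Finite := by
    apply Set.Finite.subset (Set.finite_Iio n)
    intro i hi
    simp only [Function.mem_support] at hi
    by_contra hc
    simp only [Set.mem_Iio, not_lt] at hc
    rw [hmu0 i hc] at hi
    omega
  have hs2 : (Function.support B).Finite := by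
    apply Set.Finite.subset (Set.finite_Iio (n+1))
    intro i hi
    simp only [Function.mem_support, hB] at hi
    by_contra hc
    simp only [Set.mem_Iio, not_lt] at hc
    rw [dif_neg (by omega)] at hi
    exact hi rfl
  have h1 : stripSize lam (auxPhi mu n c) = ∑ᶠ i, ((mu i - lam i) + B i) := by
    unfold stripSize
    exact finsum_congr hpt
  rw [h1, finsum_add_distrib hs1 hs2]
  congr 1
  have h2 : ∑ᶠ i, B i = ∑ i ∈ range (n+1), B i := by
    apply finsum_eq_finset_sum_of_support_subset
    intro i hi
    simp only [Function.mem_support, hB] at hi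
    simp only [Finset.coe_range, Set.mem_Iio]
    by_contra hc
    rw [dif_neg (by omega)] at hi
    exact hi rfl
  rw [h2, Finset.sum_range (fun i => B i)]
  exact Finset.sum_congr rfl fun i _ => by simp [hB]; intro h; have := i.isLt; omega

lemma aux_rows (lam mu : ℕ → ℕ) (A n : ℕ) (hstr : ∀ i, mu (i+1) ≤ lam i)
    (hlam0 : ∀ i, n ≤ i → lam i = 0) (c : Fin (n+1) → ℕ) :
    stripRowsBar lam (auxPhi mu n c) =
      (Finset.univ.filter fun i : Fin (n+1) => i ≠ 0 ∧ c i < auxCap lam mu A n i).card := by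
  have hset : {i : ℕ | auxPhi mu n c (i + 1) < lam i}
      = ↑((range n).filter fun i => auxPhi mu n c (i+1) < lam i) := by
    ext i
    simp only [Set.mem_setOf_eq, Finset.coe_filter, Finset.mem_range, Set.mem_setOf_eq]
    constructor
    · intro h
      refine ⟨?_, h⟩
      by_contra hc
      rw [hlam0 i (by omega)] at h
      omega
    · exact fun h => h.2
  rw [stripRowsBar, hset, Set.ncard_coe_finset]
  apply Finset.card_bij (fun i hi => (⟨i + 1, by
    simp only [Finset.mem_filter, Finset.mem_range] at hi; omega⟩ : Fin (n+1)))
  · intro i hi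
    simp only [Finset.mem_filter, Finset.mem_range] at hi
    obtain ⟨hin, hlt⟩ := hi
    have hq : i + 1 < n + 1 := by omega
    have h1 : auxPhi mu n c (i+1) = mu (i+1) + c ⟨i+1, hq⟩ := by
      simp only [auxPhi]
      rw [dif_pos hq]
    rw [h1] at hlt
    have h2 := hstr i
    have key : c (⟨i+1, hq⟩ : Fin (n+1)) < lam i - mu (i+1) := by omega
    simp only [Finset.mem_filter, Finset.mem_univ, true_and]
    constructor
    · intro h
      have := congrArg Fin.val h
      simp at this
    · show c _ < auxCap lam mu A n ⟨i+1, _⟩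
      simp only [auxCap, Fin.val_mk]
      rw [if_neg (by omega)]
      simpa using key
  · intro i hi j hj h
    have := congrArg Fin.val h
    simp only at this
    omega
  · intro j hj
    simp only [Finset.mem_filter, Finset.mem_univ, true_and] at hj
    obtain ⟨hj0, hjlt⟩ := hj
    have hjv : 1 ≤ j.val := by
      rcases Nat.eq_zero_or_pos j.val with h | h
      · exact absurd (Fin.ext h : j = 0) hj0
      · omega
    have hjn : j.val < n + 1 := j.isLt
    refine ⟨j.val - 1, ?_, ?_⟩
    · simp only [Finset.mem_filter, Finset.mem_range]
      simp only [auxCap] at hjlt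
      rw [if_neg (by omega)] at hjlt
      constructor
      · omega
      · have h1 : j.val - 1 + 1 = j.val := by omega
        rw [h1]
        have h2 : auxPhi mu n c j.val = mu j.val + c ⟨j.val, hjn⟩ := by
          simp only [auxPhi]
          rw [dif_pos hjn]
        rw [h2]
        simp only [Fin.eta] at hjlt ⊢
        omega
    · apply Fin.ext
      simp only
      omega

end AuxLemmas

/-- Lemma 3 (2), rephrased: for a horizontal strip `μ/λ` and `a > 0` with `|μ/λ| ≤ a`,
`∑_ν (−1)^{a−|ν/λ|} C(r(λ/ν̄), a−|ν/λ|) = 1`, the sum being over all partitions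
`ν ⊇ μ` such that `ν/λ` is a horizontal strip and `|ν/λ| ≤ a`. -/
theorem hstrip_mobius_sum_le
    (lam mu : ℕ → ℕ) (hlam : IsPartition lam) (hmu : IsPartition mu)
    (hstrip : IsHStrip lam mu) (a : ℕ) (ha : 0 < a) (haM : stripSize lam mu ≤ a) :
    (∑ᶠ nu ∈ {nu : ℕ → ℕ | IsPartition nu ∧ (∀ i, mu i ≤ nu i) ∧
        IsHStrip lam nu ∧ stripSize lam nu ≤ a},
      (-1 : ℤ) ^ (a - stripSize lam nu) *
        ((stripRowsBar lam nu).choose (a - stripSize lam nu) : ℤ)) = 1 := by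
  obtain ⟨hmu_anti, N, hN⟩ := hmu
  obtain ⟨hlm, hstr⟩ := hstrip
  set n := N + 1 with hn
  have hmu0 : ∀ i, n ≤ i → mu i = 0 := fun i hi => hN i (by omega)
  have hlam0 : ∀ i, n ≤ i → lam i = 0 := fun i hi => Nat.le_zero.mp ((hmu0 i hi) ▸ hlm i)
  set s := stripSize lam mu with hs
  set A := a - s with hA
  set cap := auxCap lam mu A n with hcap
  set T := (Fintype.piFinset fun i => Finset.range (cap i + 1)).filter
      (fun c => ∑ i, c i ≤ A) with hT
  have hcap0 : cap 0 = A := by simp [hcap, auxCap]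
  have hPhi_lt : ∀ (c : Fin (n+1) → ℕ) (i : ℕ) (h : i < n+1),
      auxPhi mu n c i = mu i + c ⟨i, h⟩ := by
    intro c i h; simp only [auxPhi]; rw [dif_pos h]
  have hPhi_ge : ∀ (c : Fin (n+1) → ℕ) (i : ℕ), n+1 ≤ i → auxPhi mu n c i = 0 := by
    intro c i h
    have h2 := hmu0 i (by omega)
    simp only [auxPhi]
    rw [dif_neg (by omega)]
    omega
  have hSeq : {nu : ℕ → ℕ | IsPartition nu ∧ (∀ i, mu i ≤ nu i) ∧
      IsHStrip lam nu ∧ stripSize lam nu ≤ a} = auxPhi mu n '' ↑T := by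
    ext nu
    simp only [Set.mem_setOf_eq, Set.mem_image, Finset.mem_coe]
    constructor
    · rintro ⟨hp, hge, ⟨hge2, hstep⟩, hsize⟩
      refine ⟨fun i => nu i.val - mu i.val, ?_, ?_⟩
      · -- membership in T
        have hphi : auxPhi mu n (fun i => nu i.val - mu i.val) = nu := by
          funext i
          by_cases h : i < n + 1
          · rw [hPhi_lt _ i h]
            have := hge i
            show mu i + (nu i - mu i) = nu i
            omega
          · rw [hPhi_ge _ i (by omega)]
            have h2 := hstep (i-1)
            have h3 : i - 1 + 1 = i := by omega
            rw [h3] at h2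
            have h4 := hlam0 (i-1) (by omega)
            omega
        have hsz2 := aux_size lam mu n hlm hmu0 (fun i : Fin (n+1) => nu i.val - mu i.val)
        rw [hphi, ← hs] at hsz2
        have hsum : ∑ i : Fin (n+1), (nu i.val - mu i.val) ≤ A := by omega
        rw [hT, Finset.mem_filter]
        refine ⟨?_, hsum⟩
        rw [Fintype.mem_piFinset]
        intro i
        rw [Finset.mem_range]
        by_cases h0 : i.val = 0
        · have h1 : (nu i.val - mu i.val) ≤ ∑ j : Fin (n+1), (nu j.val - mu j.val) :=
            Finset.single_le_sum (f := fun j : Fin (n+1) => nu j.val - mu j.val)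
              (fun j _ => Nat.zero_le _) (Finset.mem_univ i)
          have h2 : cap i = A := by simp [hcap, auxCap, h0]
          show nu i.val - mu i.val < cap i + 1
          omega
        · have h1 := hstep (i.val - 1)
          have h3 : i.val - 1 + 1 = i.val := by omega
          rw [h3] at h1
          have h2 : cap i = lam (i.val - 1) - mu i.val := by simp [hcap, auxCap, h0]
          show nu i.val - mu i.val < cap i + 1
          omega
      · funext i
        by_cases h : i < n + 1
        · rw [hPhi_lt _ i h]
          have := hge i
          show mu i + (nu i - mu i) = nu i
          omega
        · rw [hPhi_ge _ i (by omega)]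
          have h2 := hstep (i-1)
          have h3 : i - 1 + 1 = i := by omega
          rw [h3] at h2
          have h4 := hlam0 (i-1) (by omega)
          omega
    · rintro ⟨c, hcT, rfl⟩
      rw [hT, Finset.mem_filter, Fintype.mem_piFinset] at hcT
      obtain ⟨hmem, hsum⟩ := hcT
      have hcle : ∀ i : Fin (n+1), c i ≤ cap i := by
        intro i
        have := hmem i
        rw [Finset.mem_range] at this
        omega
      have hstep2 : ∀ i, auxPhi mu n c (i+1) ≤ lam i := by
        intro i
        by_cases h : i + 1 < n + 1
        · rw [hPhi_lt c (i+1) h]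
          have h1 := hcle ⟨i+1, h⟩
          have h2 : cap ⟨i+1, h⟩ = lam i - mu (i+1) := by
            simp [hcap, auxCap]
          have h3 := hstr i
          omega
        · rw [hPhi_ge c (i+1) (by omega)]
          exact Nat.zero_le _
      have hge : ∀ i, mu i ≤ auxPhi mu n c i := by
        intro i; simp only [auxPhi]; omega
      have hgelam : ∀ i, lam i ≤ auxPhi mu n c i := fun i => le_trans (hlm i) (hge i)
      refine ⟨⟨fun i => le_trans (hstep2 i) (hgelam i), n+1, fun i h => hPhi_ge c i h⟩,
        hge, ⟨hgelam, hstep2⟩, ?_⟩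
      rw [aux_size lam mu n hlm hmu0 c]
      omega
  rw [hSeq]
  have hinj : Set.InjOn (auxPhi mu n) ↑T := by
    intro c _ c' _ h
    funext i
    have h2 := congrFun h i.val
    rw [hPhi_lt c i.val i.isLt, hPhi_lt c' i.val i.isLt] at h2
    simp only [Fin.eta] at h2
    omega
  rw [finsum_mem_image hinj, finsum_mem_coe_finset]
  refine Eq.trans ?_ (aux_core n A cap hcap0)
  apply Finset.sum_congr rfl
  intro c hc
  have hsz : stripSize lam (auxPhi mu n c) = s + ∑ i, c i := aux_size lam mu n hlm hmu0 c
  have hrw : stripRowsBar lam (auxPhi mu n c) =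
      (Finset.univ.filter fun i => i ≠ 0 ∧ c i < cap i).card := aux_rows lam mu A n hstr hlam0 c
  have hsub : a - (s + ∑ i, c i) = A - ∑ i, c i := by omega
  rw [hsz, hrw, hsub]
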